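/- Let f₁, …, fₙ : [t₀, ∞) → ℂ be continuous functions and s₁, …, sₙ ∈ ℂ such that each iterated integral F^{f_{i},…,f_{j}}(s_i,…,s_j) := ∫_{t₀ ≤ t_i ≤ ⋯ ≤ t_j < ∞} f_i(t_i) t_i^{s_i−1} ⋯ f_j(t_j) t_j^{s_j−1} dt_i⋯dt_j converges absolutely. Then for 1 ≤ p < n: F^{f₁,…,f_p}(s₁,…,s_p) · F^{f_{p+1},…,fₙ}(s_{p+1},…,sₙ) = Σ_{σ} F^{f_{σ(1)},…,f_{σ(n)}}(s_{σ(1)},…,s_{σ(n)}), where σ ranges over the (p, n−p)-shuffles, i.e., permutations of {1,…,n} such that σ⁻¹ is increasing on {1,…,p} and on {p+1,…,n}. -/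

import Mathlib

open MeasureTheory

namespace Stmt16

/-- The simplex `{t₀ ≤ u₁ ≤ ⋯ ≤ u_m < ∞}` in `ℝᵐ`. -/
def simplex (m : ℕ) (t₀ : ℝ) : Set (Fin m → ℝ) :=
  {u | (∀ i j : Fin m, i ≤ j → u i ≤ u j) ∧ ∀ i, t₀ ≤ u i}

/-- The integrand of the iterated Mellin integral attached to the selection
`ι : Fin m → Fin n` of the functions `f` and exponents `s`. -/
noncomputable def integrand {n m : ℕ} (f : Fin n → ℝ → ℂ) (s : Fin n → ℂ)
    (ι : Fin m → Fin n) (u : Fin m → ℝ) : ℂ :=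
  ∏ i : Fin m, f (ι i) (u i) * (u i : ℂ) ^ (s (ι i) - 1)

/-- The iterated integral `F^{f_{ι(1)},…,f_{ι(m)}}(s_{ι(1)},…,s_{ι(m)})` over the
simplex `{t₀ ≤ u₁ ≤ ⋯ ≤ u_m < ∞}`. -/
noncomputable def Fint {n : ℕ} (t₀ : ℝ) (f : Fin n → ℝ → ℂ) (s : Fin n → ℂ)
    {m : ℕ} (ι : Fin m → Fin n) : ℂ :=
  ∫ u in simplex m t₀, integrand f s ι u

/-- `σ` is a `(p, n−p)`-shuffle: `σ⁻¹` is increasing on `{0,…,p−1}` and on `{p,…,n−1}`. -/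
def IsShuffle {n : ℕ} (p : ℕ) (σ : Equiv.Perm (Fin n)) : Prop :=
  (∀ a b : Fin n, a.1 < p → b.1 < p → a ≤ b → σ⁻¹ a ≤ σ⁻¹ b) ∧
  (∀ a b : Fin n, p ≤ a.1 → p ≤ b.1 → a ≤ b → σ⁻¹ a ≤ σ⁻¹ b)

/-- A set defined by monotonicity constraints on coordinates is closed. -/
private lemma isClosed_mono_set {m : ℕ} (Q : Fin m → Fin m → Prop) :
    IsClosed {u : Fin m → ℝ | ∀ a b : Fin m, Q a b → u a ≤ u b} := by
  classical
  have h : {u : Fin m → ℝ | ∀ a b : Fin m, Q a b → u a ≤ u b} =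
      ⋂ (a : Fin m), ⋂ (b : Fin m), {u : Fin m → ℝ | Q a b → u a ≤ u b} := by
    ext u; simp [Set.mem_iInter]
  rw [h]
  refine isClosed_iInter fun a => isClosed_iInter fun b => ?_
  by_cases hq : Q a b
  · have : {u : Fin m → ℝ | Q a b → u a ≤ u b} = {u : Fin m → ℝ | u a ≤ u b} := by
      ext u; simp [hq]
    rw [this]; exact isClosed_le (continuous_apply a) (continuous_apply b)
  · have : {u : Fin m → ℝ | Q a b → u a ≤ u b} = Set.univ := by
      ext u; simp [hq]
    rw [this]; exact isClosed_univ

private lemma isClosed_lb {m : ℕ} (t₀ : ℝ) :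
    IsClosed {u : Fin m → ℝ | ∀ i, t₀ ≤ u i} := by
  have h : {u : Fin m → ℝ | ∀ i, t₀ ≤ u i} = ⋂ (i : Fin m), {u : Fin m → ℝ | t₀ ≤ u i} := by
    ext u; simp [Set.mem_iInter]
  rw [h]
  exact isClosed_iInter fun i => isClosed_le continuous_const (continuous_apply i)

private lemma isClosed_simplex (m : ℕ) (t₀ : ℝ) : IsClosed (simplex m t₀) :=
  (isClosed_mono_set (fun a b : Fin m => a ≤ b)).inter (isClosed_lb t₀)

/-- Transporting integrability statements across an equality of dimensions. -/
private lemma integrableOn_congr_m {n : ℕ} (f : Fin n → ℝ → ℂ) (s : Fin n → ℂ) (t₀ : ℝ)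
    {m m' : ℕ} (h : m = m') {ι : Fin m → Fin n} {ι' : Fin m' → Fin n}
    (hι : ∀ k : Fin m', (ι' k).1 = (ι (Fin.cast h.symm k)).1)
    (H : IntegrableOn (integrand f s ι) (simplex m t₀) volume) :
    IntegrableOn (integrand f s ι') (simplex m' t₀) volume := by
  subst h
  have hιι : ι' = ι := funext fun k => Fin.ext (by simpa using hι k)
  rwa [hιι]

open Classical in
/-- Shuffle relation for iterated Mellin-type integrals: if all the iterated
integrals `F^{f_i,…,f_j}(s_i,…,s_j)` (for `i ≤ j`, consecutive blocks) converge
absolutely, then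
`F^{f₁,…,f_p}(s₁,…,s_p) · F^{f_{p+1},…,fₙ}(s_{p+1},…,sₙ)
  = Σ_{σ (p,n−p)-shuffle} F^{f_{σ(1)},…,f_{σ(n)}}(s_{σ(1)},…,s_{σ(n)})`. -/
theorem stmt16 (n p : ℕ) (hp : 1 ≤ p) (hpn : p < n) (t₀ : ℝ)
    (f : Fin n → ℝ → ℂ) (s : Fin n → ℂ)
    (hf : ∀ i, ContinuousOn (f i) (Set.Ici t₀))
    (hconv : ∀ i j : Fin n, (hij : i ≤ j) →
      IntegrableOn
        (integrand f s (fun k : Fin (j.1 - i.1 + 1) =>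
          (⟨i.1 + k.1, by
            have h1 := k.isLt; have h2 := j.isLt; have h3 := Fin.le_def.mp hij
            omega⟩ : Fin n)))
        (simplex (j.1 - i.1 + 1) t₀) volume) :
    Fint t₀ f s (fun k : Fin p => (⟨k.1, by have := k.isLt; omega⟩ : Fin n)) *
      Fint t₀ f s (fun k : Fin (n - p) => (⟨p + k.1, by have := k.isLt; omega⟩ : Fin n)) =
    ∑ σ : Equiv.Perm (Fin n),
      if IsShuffle p σ then Fint t₀ f s (fun i => σ i) else 0 := by
  classical
  have hq : p + (n - p) = n := by omega
  set F : (Fin n → ℝ) → ℂ := integrand f s id with hFdef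
  let ι₁ : Fin p → Fin n := fun k => ⟨k.1, by have := k.isLt; omega⟩
  let ι₂ : Fin (n - p) → Fin n := fun k => ⟨p + k.1, by have := k.isLt; omega⟩
  let e : Fin p ⊕ Fin (n - p) ≃ Fin n := finSumFinEquiv.trans (finCongr hq)
  have he_l : ∀ a : Fin p, (e (Sum.inl a)).1 = a.1 := by
    intro a; simp [e]
  have he_r : ∀ b : Fin (n - p), (e (Sum.inr b)).1 = p + b.1 := by
    intro b; simp [e]
  have he_l' : ∀ a : Fin p, e (Sum.inl a) = ι₁ a := fun a => Fin.ext (he_l a)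
  have he_r' : ∀ b : Fin (n - p), e (Sum.inr b) = ι₂ b := fun b => Fin.ext (he_r b)
  -- the product region and the permuted simplices
  set P : Set (Fin n → ℝ) :=
    {u | (∀ a b : Fin n, a.1 < p → b.1 < p → a ≤ b → u a ≤ u b) ∧
         (∀ a b : Fin n, p ≤ a.1 → p ≤ b.1 → a ≤ b → u a ≤ u b) ∧ ∀ i, t₀ ≤ u i} with hPdef
  set S : Equiv.Perm (Fin n) → Set (Fin n → ℝ) :=
    fun σ => (fun u : Fin n → ℝ => u ∘ σ) ⁻¹' simplex n t₀ with hSdef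
  have hPclosed : IsClosed P := by
    have hPeq : P = ({u : Fin n → ℝ | ∀ a b : Fin n,
        ((a.1 < p ∧ b.1 < p ∧ a ≤ b) ∨ (p ≤ a.1 ∧ p ≤ b.1 ∧ a ≤ b)) → u a ≤ u b} ∩
        {u : Fin n → ℝ | ∀ i, t₀ ≤ u i}) := by
      rw [hPdef]; ext u
      constructor
      · rintro ⟨h1, h2, h3⟩
        refine ⟨fun a b h => ?_, h3⟩
        rcases h with ⟨x, y, z⟩ | ⟨x, y, z⟩
        · exact h1 a b x y z
        · exact h2 a b x y z
      · rintro ⟨h1, h2⟩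
        exact ⟨fun a b x y z => h1 a b (Or.inl ⟨x, y, z⟩),
               fun a b x y z => h1 a b (Or.inr ⟨x, y, z⟩), h2⟩
    rw [hPeq]; exact (isClosed_mono_set _).inter (isClosed_lb t₀)
  have hPmeas : MeasurableSet P := hPclosed.measurableSet
  have hSmeas : ∀ σ : Equiv.Perm (Fin n), MeasurableSet (S σ) := by
    intro σ
    have hm : Measurable fun (u : Fin n → ℝ) => u ∘ σ :=
      measurable_pi_lambda _ fun i => measurable_pi_apply _
    exact hm (isClosed_simplex n t₀).measurableSet
  -- the product equivalence
  let E : ((Fin p → ℝ) × ((Fin (n - p)) → ℝ)) ≃ᵐ (Fin n → ℝ) :=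
    (MeasurableEquiv.sumPiEquivProdPi (fun _ : Fin p ⊕ Fin (n - p) => ℝ)).symm.trans
      (MeasurableEquiv.piCongrLeft (fun _ : Fin n => ℝ) e)
  have hE : MeasurePreserving E volume volume :=
    (volume_measurePreserving_piCongrLeft (fun _ : Fin n => ℝ) e).comp
      (volume_measurePreserving_sumPiEquivProdPi_symm (fun _ : Fin p ⊕ Fin (n - p) => ℝ))
  have hEval_l : ∀ (x : Fin p → ℝ) (y : Fin (n - p) → ℝ) (a : Fin p),
      E (x, y) (e (Sum.inl a)) = x a := by
    intro x y a
    exact Equiv.piCongrLeft_sumInl (fun _ : Fin n => ℝ) e x y a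
  have hEval_r : ∀ (x : Fin p → ℝ) (y : Fin (n - p) → ℝ) (b : Fin (n - p)),
      E (x, y) (e (Sum.inr b)) = y b := by
    intro x y b
    exact Equiv.piCongrLeft_sumInr (fun _ : Fin n => ℝ) e x y b
  -- E maps the product of simplices onto P
  have hEpre : (⇑E) ⁻¹' P = simplex p t₀ ×ˢ simplex (n - p) t₀ := by
    ext z
    obtain ⟨x, y⟩ := z
    simp only [Set.mem_preimage, Set.mem_prod]
    constructor
    · rintro ⟨h1, h2, h3⟩
      refine ⟨⟨fun i j hij => ?_, fun i => ?_⟩, ⟨fun i j hij => ?_, fun i => ?_⟩⟩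
      · have h := h1 (e (Sum.inl i)) (e (Sum.inl j)) (by rw [he_l]; exact i.isLt)
          (by rw [he_l]; exact j.isLt) (by rw [Fin.le_def, he_l, he_l]; exact hij)
        rwa [hEval_l, hEval_l] at h
      · have h := h3 (e (Sum.inl i)); rwa [hEval_l] at h
      · have h := h2 (e (Sum.inr i)) (e (Sum.inr j)) (by rw [he_r]; omega)
          (by rw [he_r]; omega) (by rw [Fin.le_def, he_r, he_r]; exact Nat.add_le_add_left hij p)
        rwa [hEval_r, hEval_r] at h
      · have h := h3 (e (Sum.inr i)); rwa [hEval_r] at h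
    · rintro ⟨⟨hx1, hx2⟩, hy1, hy2⟩
      have keyl : ∀ a : Fin n, (ha : a.1 < p) → E (x, y) a = x ⟨a.1, ha⟩ := by
        intro a ha
        have h : a = e (Sum.inl ⟨a.1, ha⟩) := Fin.ext (by rw [he_l])
        conv_lhs => rw [h]
        rw [hEval_l]
      have keyr : ∀ a : Fin n, (ha : p ≤ a.1) → E (x, y) a
          = y ⟨a.1 - p, by have := a.isLt; omega⟩ := by
        intro a ha
        have h : a = e (Sum.inr ⟨a.1 - p, by have := a.isLt; omega⟩) :=
          Fin.ext (by rw [he_r]; exact (Nat.add_sub_cancel' ha).symm)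
        conv_lhs => rw [h]
        rw [hEval_r]
      refine ⟨fun a b hap hbp hab => ?_, fun a b hap hbp hab => ?_, fun i => ?_⟩
      · rw [keyl a hap, keyl b hbp]
        exact hx1 _ _ (by rw [Fin.le_def]; exact Fin.le_def.mp hab)
      · rw [keyr a hap, keyr b hbp]
        refine hy1 _ _ ?_
        rw [Fin.le_def]
        have := Fin.le_def.mp hab
        simp only
        omega
      · by_cases hi : i.1 < p
        · rw [keyl i hi]; exact hx2 _
        · rw [keyr i (by omega)]; exact hy2 _
  -- the integrand splits along E
  have hSplit : ∀ (x : Fin p → ℝ) (y : Fin (n - p) → ℝ),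
      F (E (x, y)) = integrand f s ι₁ x * integrand f s ι₂ y := by
    intro x y
    have h1 : F (E (x, y)) = ∏ k : Fin p ⊕ Fin (n - p),
        (f (e k) (E (x, y) (e k)) * ((E (x, y) (e k) : ℝ) : ℂ) ^ (s (e k) - 1)) := by
      rw [hFdef]
      unfold integrand
      simp only [id_eq]
      exact (Equiv.prod_comp e fun j => f j (E (x, y) j) * ((E (x, y) j : ℝ) : ℂ) ^ (s j - 1)).symm
    rw [h1, Fintype.prod_sum_type]
    unfold integrand
    congr 1
    · exact Finset.prod_congr rfl fun a _ => by rw [hEval_l x y a, he_l' a]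
    · exact Finset.prod_congr rfl fun b _ => by rw [hEval_r x y b, he_r' b]
  -- integrability of the two block integrands, from `hconv`
  have h₁ : IntegrableOn (integrand f s ι₁) (simplex p t₀) volume := by
    refine integrableOn_congr_m f s t₀ (show (p - 1) - 0 + 1 = p by omega) ?_
      (hconv ⟨0, by omega⟩ ⟨p - 1, by omega⟩ (Fin.mk_le_mk.mpr (by omega)))
    intro k; simp [ι₁]
  have h₂ : IntegrableOn (integrand f s ι₂) (simplex (n - p) t₀) volume := by
    refine integrableOn_congr_m f s t₀ (show (n - 1) - p + 1 = n - p by omega) ?_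
      (hconv ⟨p, by omega⟩ ⟨n - 1, by omega⟩ (Fin.mk_le_mk.mpr (by omega)))
    intro k; simp [ι₂]
  -- integrability over the product region
  have hprod : IntegrableOn (fun z : (Fin p → ℝ) × ((Fin (n - p)) → ℝ) =>
      integrand f s ι₁ z.1 * integrand f s ι₂ z.2)
      (simplex p t₀ ×ˢ simplex (n - p) t₀) volume := by
    rw [IntegrableOn, Measure.volume_eq_prod, ← Measure.prod_restrict]
    exact h₁.mul_prod h₂
  have hFE : IntegrableOn (F ∘ ⇑E) ((⇑E) ⁻¹' P) volume := by
    rw [hEpre]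
    have h : F ∘ ⇑E = fun z : (Fin p → ℝ) × ((Fin (n - p)) → ℝ) =>
        integrand f s ι₁ z.1 * integrand f s ι₂ z.2 :=
      funext fun z => hSplit z.1 z.2
    rw [h]; exact hprod
  have hFP : IntegrableOn F P volume :=
    (hE.integrableOn_comp_preimage E.measurableEmbedding).mp hFE
  -- LHS as an integral over P
  have hLHS : Fint t₀ f s ι₁ * Fint t₀ f s ι₂ = ∫ u in P, F u := by
    have step1 : Fint t₀ f s ι₁ * Fint t₀ f s ι₂ =
        ∫ z in simplex p t₀ ×ˢ simplex (n - p) t₀,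
          integrand f s ι₁ z.1 * integrand f s ι₂ z.2
          ∂((volume : Measure (Fin p → ℝ)).prod (volume : Measure ((Fin (n - p)) → ℝ))) :=
      (setIntegral_prod_mul _ _ _ _).symm
    have step2 : (∫ z in (⇑E) ⁻¹' P, F (E z)) = ∫ u in P, F u :=
      hE.setIntegral_preimage_emb E.measurableEmbedding F P
    rw [step1, ← Measure.volume_eq_prod, ← hEpre, ← step2]
    exact integral_congr_ae (Filter.Eventually.of_forall fun z => (hSplit z.1 z.2).symm)
  -- each permuted Fint as an integral over S σ
  have hFintS : ∀ σ : Equiv.Perm (Fin n), Fint t₀ f s ⇑σ = ∫ u in S σ, F u := by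
    intro σ
    let M : (Fin n → ℝ) ≃ᵐ (Fin n → ℝ) :=
      MeasurableEquiv.piCongrLeft (fun _ : Fin n => ℝ) σ.symm
    have hM : MeasurePreserving M volume volume :=
      volume_measurePreserving_piCongrLeft (fun _ : Fin n => ℝ) σ.symm
    have hMapp : ∀ u : Fin n → ℝ, M u = u ∘ σ := by
      intro u; funext j
      have h : j = σ.symm (σ j) := (σ.symm_apply_apply j).symm
      show Equiv.piCongrLeft (fun _ : Fin n => ℝ) σ.symm u j = u (σ j)
      conv_lhs => rw [h]
      exact Equiv.piCongrLeft_apply_apply (fun _ : Fin n => ℝ) σ.symm u (σ j)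
    have hSM : S σ = ⇑M ⁻¹' simplex n t₀ := by
      rw [hSdef]
      ext u
      simp only [Set.mem_preimage, hMapp]
    have key := hM.setIntegral_preimage_emb M.measurableEmbedding
      (integrand f s ⇑σ) (simplex n t₀)
    rw [Fint, ← key, ← hSM]
    refine integral_congr_ae (Filter.Eventually.of_forall fun u => ?_)
    show integrand f s ⇑σ (M u) = F u
    rw [hMapp]
    rw [hFdef]
    unfold integrand
    simp only [id_eq, Function.comp_apply]
    exact Equiv.prod_comp σ (fun j => f j (u j) * ((u j : ℝ) : ℂ) ^ (s j - 1))
  -- combinatorics of shuffles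
  have keyPS : ∀ σ : Equiv.Perm (Fin n), IsShuffle p σ → S σ ⊆ P := by
    intro σ hσ u hu
    have hu' : (∀ i j : Fin n, i ≤ j → u (σ i) ≤ u (σ j)) ∧ ∀ i, t₀ ≤ u (σ i) := hu
    obtain ⟨hmono, hlb⟩ := hu'
    refine ⟨fun a b hap hbp hab => ?_, fun a b hap hbp hab => ?_, fun i => ?_⟩
    · have h := hmono (σ⁻¹ a) (σ⁻¹ b) (hσ.1 a b hap hbp hab)
      simpa using h
    · have h := hmono (σ⁻¹ a) (σ⁻¹ b) (hσ.2 a b hap hbp hab)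
      simpa using h
    · have h := hlb (σ⁻¹ i)
      simpa using h
  have keyExists : ∀ u : Fin n → ℝ, Function.Injective u → u ∈ P →
      ∃ σ : Equiv.Perm (Fin n), IsShuffle p σ ∧ u ∈ S σ := by
    intro u hinj hu
    have hu' : (∀ a b : Fin n, a.1 < p → b.1 < p → a ≤ b → u a ≤ u b) ∧
        (∀ a b : Fin n, p ≤ a.1 → p ≤ b.1 → a ≤ b → u a ≤ u b) ∧ ∀ i, t₀ ≤ u i := hu
    obtain ⟨h1, h2, h3⟩ := hu'
    refine ⟨Tuple.sort u, ⟨?_, ?_⟩, ?_, ?_⟩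
    · intro a b hap hbp hab
      rcases eq_or_lt_of_le hab with h | hlt
      · rw [h]
      · have hne : u a ≠ u b := fun hh => (ne_of_lt hlt) (hinj hh)
        have hult : u a < u b := lt_of_le_of_ne (h1 a b hap hbp hab) hne
        have hsm : StrictMono (u ∘ Tuple.sort u) :=
          (Tuple.monotone_sort u).strictMono_of_injective
            (hinj.comp (Tuple.sort u).injective)
        have hlt2 : (u ∘ Tuple.sort u) ((Tuple.sort u)⁻¹ a)
            < (u ∘ Tuple.sort u) ((Tuple.sort u)⁻¹ b) := by
          simpa using hult
        exact le_of_lt (hsm.lt_iff_lt.mp hlt2)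
    · intro a b hap hbp hab
      rcases eq_or_lt_of_le hab with h | hlt
      · rw [h]
      · have hne : u a ≠ u b := fun hh => (ne_of_lt hlt) (hinj hh)
        have hult : u a < u b := lt_of_le_of_ne (h2 a b hap hbp hab) hne
        have hsm : StrictMono (u ∘ Tuple.sort u) :=
          (Tuple.monotone_sort u).strictMono_of_injective
            (hinj.comp (Tuple.sort u).injective)
        have hlt2 : (u ∘ Tuple.sort u) ((Tuple.sort u)⁻¹ a)
            < (u ∘ Tuple.sort u) ((Tuple.sort u)⁻¹ b) := by
          simpa using hult
        exact le_of_lt (hsm.lt_iff_lt.mp hlt2)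
    · exact fun i j hij => Tuple.monotone_sort u hij
    · exact fun i => h3 _
  have keyUniq : ∀ u : Fin n → ℝ, Function.Injective u → ∀ σ τ : Equiv.Perm (Fin n),
      u ∈ S σ → u ∈ S τ → σ = τ := by
    intro u hinj σ τ hσ hτ
    have hsm : ∀ ρ : Equiv.Perm (Fin n), u ∈ S ρ → StrictMono (u ∘ ρ) := by
      intro ρ hρ
      have hρ' : (∀ i j : Fin n, i ≤ j → u (ρ i) ≤ u (ρ j)) ∧ ∀ i, t₀ ≤ u (ρ i) := hρ
      have hm : Monotone (u ∘ ρ) := fun i j hij => hρ'.1 i j hij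
      exact hm.strictMono_of_injective (hinj.comp ρ.injective)
    have hrange : Set.range (u ∘ σ) = Set.range (u ∘ τ) := by
      rw [Set.range_comp, Set.range_comp, Equiv.range_eq_univ, Equiv.range_eq_univ]
    haveI : WellFoundedLT (Fin n) := Finite.to_wellFoundedLT
    have hcomp := ((hsm σ hσ).range_inj (hsm τ hτ)).mp hrange
    ext i
    exact congrArg Fin.val (hinj (congrFun hcomp i))
  -- the non-injective locus is null
  have hD : volume {u : Fin n → ℝ | ¬ Function.Injective u} = 0 := by
    have hsub : {u : Fin n → ℝ | ¬ Function.Injective u} ⊆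
        ⋃ (i : Fin n), ⋃ (j : Fin n), {u : Fin n → ℝ | i ≠ j ∧ u i = u j} := by
      intro u hu
      simp only [Set.mem_setOf_eq, Function.Injective, not_forall] at hu
      obtain ⟨i, j, hij, hne⟩ := hu
      exact Set.mem_iUnion.mpr ⟨i, Set.mem_iUnion.mpr ⟨j, ⟨hne, hij⟩⟩⟩
    refine measure_mono_null hsub (measure_iUnion_null fun i => measure_iUnion_null fun j => ?_)
    by_cases hij : i = j
    · have h : {u : Fin n → ℝ | i ≠ j ∧ u i = u j} = ∅ := by ext u; simp [hij]
      simp [h]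
    · set L : (Fin n → ℝ) →ₗ[ℝ] ℝ := (LinearMap.proj (R := ℝ) (φ := fun _ : Fin n => ℝ) i) - (LinearMap.proj (R := ℝ) (φ := fun _ : Fin n => ℝ) j) with hL
      have hset : {u : Fin n → ℝ | i ≠ j ∧ u i = u j} ⊆ (LinearMap.ker L : Set (Fin n → ℝ)) := by
        intro u hu
        show u ∈ LinearMap.ker L
        rw [LinearMap.mem_ker]
        show u i - u j = 0
        rw [hu.2]; ring
      refine measure_mono_null hset (Measure.addHaar_submodule volume _ ?_)
      intro htop
      have h1 : (Pi.single i (1 : ℝ) : Fin n → ℝ) ∈ LinearMap.ker L :=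
        (Submodule.eq_top_iff'.mp htop) _
      have h1' : (Pi.single i (1 : ℝ) : Fin n → ℝ) i
          - (Pi.single i (1 : ℝ) : Fin n → ℝ) j = 0 := h1
      rw [Pi.single_eq_same, Pi.single_eq_of_ne (Ne.symm hij)] at h1'
      norm_num at h1'
  -- the a.e. indicator decomposition
  let Φ : Finset (Equiv.Perm (Fin n)) := Finset.univ.filter (fun σ => IsShuffle p σ)
  have hae : ∀ᵐ u : Fin n → ℝ, Set.indicator P F u = ∑ σ ∈ Φ, Set.indicator (S σ) F u := by
    have hc : ∀ᵐ u : Fin n → ℝ, Function.Injective u := by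
      rw [ae_iff]; exact hD
    filter_upwards [hc] with u hinj
    by_cases hu : u ∈ P
    · obtain ⟨σ₀, hσ₀, hu₀⟩ := keyExists u hinj hu
      rw [Set.indicator_of_mem hu F,
        Finset.sum_eq_single_of_mem σ₀ (by simp [Φ, hσ₀])]
      · exact (Set.indicator_of_mem hu₀ F).symm
      · intro τ hτΦ hτne
        apply Set.indicator_of_notMem
        intro huτ
        exact hτne (keyUniq u hinj τ σ₀ huτ hu₀)
    · rw [Set.indicator_of_notMem hu F]
      refine (Finset.sum_eq_zero fun τ hτΦ => ?_).symm
      apply Set.indicator_of_notMem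
      intro huτ
      exact hu (keyPS τ (by simpa [Φ] using hτΦ) huτ)
  -- splitting the integral over P
  have hsplit_int : (∫ u in P, F u) = ∑ σ ∈ Φ, ∫ u in S σ, F u := by
    have hint : ∀ σ ∈ Φ, Integrable (Set.indicator (S σ) F) volume := by
      intro σ hσ
      have hsub : S σ ⊆ P := keyPS σ (by simpa [Φ] using hσ)
      exact (hFP.mono_set hsub).integrable_indicator (hSmeas σ)
    calc (∫ u in P, F u) = ∫ u, Set.indicator P F u := (integral_indicator hPmeas).symm
      _ = ∫ u, ∑ σ ∈ Φ, Set.indicator (S σ) F u := integral_congr_ae hae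
      _ = ∑ σ ∈ Φ, ∫ u, Set.indicator (S σ) F u := integral_finset_sum Φ hint
      _ = ∑ σ ∈ Φ, ∫ u in S σ, F u :=
        Finset.sum_congr rfl fun σ _ => integral_indicator (hSmeas σ)
  -- reassemble
  have hRHS : (∑ σ ∈ Φ, ∫ u in S σ, F u) =
      ∑ σ : Equiv.Perm (Fin n), if IsShuffle p σ then Fint t₀ f s (fun i => σ i) else 0 := by
    rw [Finset.sum_filter]
    refine Finset.sum_congr rfl fun σ _ => ?_
    split_ifs with h
    · exact (hFintS σ).symm
    · rfl
  exact hLHS.trans (hsplit_int.trans hRHS)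

end Stmt16
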